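/- arXiv:2208.03400 — 2 statements merged into one kernel-verified Lean document; each statement's English description precedes it below -/
import Mathlib

section
/- Let $N_1, N_2, X$ be unit vectors in a real inner product space with $\langle N_1, N_2\rangle > 0$, and suppose $\langle e^{-a\tau} N_1 + e^{-ar} N_2, X\rangle = 0$ where $a, r, \tau > 0$. Then $|\langle N_1, X\rangle| \le \frac{e^{-ar}}{\sqrt{e^{-2ar} + e^{-2a\tau}}}$ and $|\langle N_2, X\rangle| \le \frac{e^{-a\tau}}{\sqrt{e^{-2ar} + e^{-2a\tau}}}$. -/
theorem stmt1 {E : Type*} [NormedAddCommGroup E] [InnerProductSpace ℝ E]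
    (N1 N2 X : E) (hN1 : ‖N1‖ = 1) (hN2 : ‖N2‖ = 1) (hX : ‖X‖ = 1)
    (hpos : (0 : ℝ) < inner ℝ N1 N2)
    (a r τ : ℝ) (ha : 0 < a) (hr : 0 < r) (hτ : 0 < τ)
    (horth : (inner ℝ (Real.exp (-a * τ) • N1 + Real.exp (-a * r) • N2) X : ℝ) = 0) :
    |(inner ℝ N1 X : ℝ)| ≤ Real.exp (-a * r) /
        Real.sqrt (Real.exp (-2 * a * r) + Real.exp (-2 * a * τ)) ∧
    |(inner ℝ N2 X : ℝ)| ≤ Real.exp (-a * τ) /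
        Real.sqrt (Real.exp (-2 * a * r) + Real.exp (-2 * a * τ)) := by
  obtain ⟨u, hu⟩ : ∃ t : ℝ, (inner ℝ N1 X : ℝ) = t := ⟨_, rfl⟩
  obtain ⟨v, hv⟩ : ∃ t : ℝ, (inner ℝ N2 X : ℝ) = t := ⟨_, rfl⟩
  obtain ⟨c, hc⟩ : ∃ t : ℝ, (inner ℝ N1 N2 : ℝ) = t := ⟨_, rfl⟩
  have hu' : (inner ℝ X N1 : ℝ) = u := (real_inner_comm N1 X).trans hu
  have hv' : (inner ℝ X N2 : ℝ) = v := (real_inner_comm N2 X).trans hv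
  have hc' : (inner ℝ N2 N1 : ℝ) = c := (real_inner_comm N1 N2).trans hc
  set α := Real.exp (-a * τ) with hα
  set β := Real.exp (-a * r) with hβ
  have hαpos : 0 < α := Real.exp_pos _
  have hβpos : 0 < β := Real.exp_pos _
  have hcpos : 0 < c := hc ▸ hpos
  have hline : α * u + β * v = 0 := by
    have := horth
    rw [inner_add_left, real_inner_smul_left, real_inner_smul_left, hu, hv] at this
    exact this
  have huv : u * v ≤ 0 := by
    have h2 : u * (α * u + β * v) = 0 := by rw [hline]; ring
    nlinarith [sq_nonneg u, sq_nonneg v]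
  have hsum : u ^ 2 + v ^ 2 ≤ 1 := by
    have hnn : (0 : ℝ) ≤ ‖X - (u • N1 + v • N2)‖ ^ 2 := sq_nonneg _
    have hexp : ‖X - (u • N1 + v • N2)‖ ^ 2 = 1 - u ^ 2 - v ^ 2 + 2 * c * (u * v) := by
      have h := (real_inner_self_eq_norm_sq (X - (u • N1 + v • N2))).symm
      rw [h]
      simp only [inner_sub_left, inner_sub_right, inner_add_left, inner_add_right,
        real_inner_smul_left, real_inner_smul_right, real_inner_self_eq_norm_sq,
        hN1, hN2, hX, hu, hv, hu', hv', hc, hc', norm_smul, Real.norm_eq_abs, mul_one, sq_abs]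
      ring
    nlinarith [mul_nonpos_of_nonneg_of_nonpos (le_of_lt hcpos) huv]
  have hS2 : Real.exp (-2 * a * r) + Real.exp (-2 * a * τ) = β ^ 2 + α ^ 2 := by
    have h1 : β ^ 2 = Real.exp (-2 * a * r) := by
      rw [hβ, sq, ← Real.exp_add]; congr 1; ring
    have h2 : α ^ 2 = Real.exp (-2 * a * τ) := by
      rw [hα, sq, ← Real.exp_add]; congr 1; ring
    rw [h1, h2]
  have hSpos : 0 < β ^ 2 + α ^ 2 := by positivity
  have hsqrtpos : 0 < Real.sqrt (β ^ 2 + α ^ 2) := Real.sqrt_pos.mpr hSpos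
  have h4 : α * u = -(β * v) := by linarith
  have h3 : (α * u) ^ 2 = (β * v) ^ 2 := by rw [h4]; ring
  rw [hS2, hu, hv]
  constructor
  · have hsq : u ^ 2 * (β ^ 2 + α ^ 2) ≤ β ^ 2 := by nlinarith [sq_nonneg β]
    rw [le_div_iff₀ hsqrtpos]
    have hkey : (|u| * Real.sqrt (β ^ 2 + α ^ 2)) ^ 2 ≤ β ^ 2 := by
      rw [mul_pow, sq_abs, Real.sq_sqrt hSpos.le]; exact hsq
    exact (pow_le_pow_iff_left₀ (by positivity) hβpos.le two_ne_zero).mp hkey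
  · have hsq : v ^ 2 * (β ^ 2 + α ^ 2) ≤ α ^ 2 := by nlinarith [sq_nonneg α]
    rw [le_div_iff₀ hsqrtpos]
    have hkey : (|v| * Real.sqrt (β ^ 2 + α ^ 2)) ^ 2 ≤ α ^ 2 := by
      rw [mul_pow, sq_abs, Real.sq_sqrt hSpos.le]; exact hsq
    exact (pow_le_pow_iff_left₀ (by positivity) hαpos.le two_ne_zero).mp hkey
end

section
/- Let $T \subseteq \mathbb{R}^n$ be bounded with positive Lebesgue measure and let $T_h$ be its convex hull. Suppose $\mathrm{Vol}(T_h) \le R \cdot \mathrm{Vol}(T)$ for some $R \ge 1$, and that $T_h$ contains a ball of radius $\epsilon$. Then $N(T_h, \epsilon) \le R \cdot 3^n \cdot N(T, \epsilon)$, where $N$ denotes the covering number by $\epsilon$-balls. -/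
open MeasureTheory Metric Set Pointwise

lemma exists_sep_cover {E : Type*} [NormedAddCommGroup E] [NormedSpace ℝ E] [ProperSpace E]
    (S : Set (EuclideanSpace ℝ (Fin n))) (hS : Bornology.IsBounded S) {ε : ℝ} (hε : 0 < ε) :
    ∃ A : Finset (EuclideanSpace ℝ (Fin n)), ↑A ⊆ S ∧ (∀ x ∈ A, ∀ y ∈ A, x ≠ y → ε < dist x y) ∧
      S ⊆ ⋃ y ∈ A, closedBall y ε := by
  set P : Set (Set (EuclideanSpace ℝ (Fin n))) := {B | B ⊆ S ∧ ∀ x ∈ B, ∀ y ∈ B, x ≠ y → ε < dist x y} with hP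
  obtain ⟨M, hM⟩ := zorn_subset P (by
    intro c hc hchain
    refine ⟨⋃₀ c, ⟨?_, ?_⟩, fun s hs => subset_sUnion_of_mem hs⟩
    · exact sUnion_subset fun s hs => (hc hs).1
    · rintro x ⟨s, hs, hx⟩ y ⟨t, ht, hy⟩ hxy
      rcases hchain.total hs ht with h | h
      · exact (hc ht).2 x (h hx) y hy hxy
      · exact (hc hs).2 x hx y (h hy) hxy)
  have hMS : M ⊆ S := hM.prop.1
  have hsep : ∀ x ∈ M, ∀ y ∈ M, x ≠ y → ε < dist x y := hM.prop.2
  have hfin : M.Finite := by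
    have htb : TotallyBounded S :=
      (hS.isCompact_closure.totallyBounded).subset subset_closure
    obtain ⟨t, htfin, hcov⟩ := (Metric.totallyBounded_iff.mp htb) (ε/2) (by linarith)
    have hsub : M ⊆ ⋃ y ∈ t, (M ∩ ball y (ε/2)) := by
      intro x hx
      obtain ⟨y, hy, hxy⟩ := mem_iUnion₂.mp (hcov (hMS hx))
      exact mem_iUnion₂.mpr ⟨y, hy, hx, hxy⟩
    refine Set.Finite.subset (Set.Finite.biUnion htfin fun y _ => ?_) hsub
    apply Set.Subsingleton.finite
    rintro a ⟨ha, ha'⟩ b ⟨hb, hb'⟩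
    by_contra hab
    have h1 := hsep a ha b hb hab
    have h2 := dist_triangle a y b
    rw [dist_comm y b] at h2
    rw [Metric.mem_ball] at ha' hb'
    linarith
  refine ⟨hfin.toFinset, by simpa using hMS, by simpa using hsep, ?_⟩
  intro x hx
  simp only [Finite.mem_toFinset, mem_iUnion₂]
  by_contra hcon
  push_neg at hcon
  simp only [Metric.mem_closedBall, not_le] at hcon
  have hxM : x ∉ M := fun h => by have := hcon x h; simp at this; linarith
  have hins : insert x M ∈ P := by
    refine ⟨insert_subset hx hMS, ?_⟩
    intro a ha b hb hab
    rcases ha with rfl | ha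
    · rcases hb with rfl | hb
      · exact absurd rfl hab
      · exact hcon b hb
    · rcases hb with rfl | hb
      · rw [dist_comm]; exact hcon a ha
      · exact hsep a ha b hb hab
  exact hxM (hM.2 hins (subset_insert x M) (mem_insert x M))

/-- The covering number of `S` by closed `ε`-balls. -/
noncomputable def coverNum {X : Type*} [MetricSpace X] (S : Set X) (ε : ℝ) : ℕ :=
  sInf {n : ℕ | ∃ t : Finset X, t.card = n ∧ S ⊆ ⋃ y ∈ t, Metric.closedBall y ε}

theorem stmt14 (n : ℕ) (T : Set (EuclideanSpace ℝ (Fin n)))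
    (hbd : Bornology.IsBounded T) (hmeas : MeasurableSet T) (hpos : 0 < volume T)
    (R : ℝ) (hR : 1 ≤ R)
    (hvol : (volume (convexHull ℝ T)).toReal ≤ R * (volume T).toReal)
    (ε : ℝ) (hε : 0 < ε) (x₀ : EuclideanSpace ℝ (Fin n))
    (hball : Metric.closedBall x₀ ε ⊆ convexHull ℝ T) :
    (coverNum (convexHull ℝ T) ε : ℝ) ≤ R * 3 ^ n * coverNum T ε := by
  set Th : Set (EuclideanSpace ℝ (Fin n)) := convexHull ℝ T with hTh
  have hThbd : Bornology.IsBounded Th := isBounded_convexHull.mpr hbd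
  have hThconv : Convex ℝ Th := convex_convexHull ℝ T
  -- unit ball volume
  set V : ENNReal := volume (closedBall (0 : EuclideanSpace ℝ (Fin n)) 1) with hV
  have hVpos : 0 < V := measure_closedBall_pos volume _ one_pos
  have hVfin : V ≠ ⊤ := (isBounded_closedBall.measure_lt_top).ne
  have hvolball : ∀ (x : EuclideanSpace ℝ (Fin n)) (r : ℝ), 0 ≤ r →
      volume (closedBall x r) = ENNReal.ofReal (r ^ n) * V := by
    intro x r hr
    rw [Measure.addHaar_closedBall' volume x hr, finrank_euclideanSpace_fin]
  -- maximal separated set in Th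
  obtain ⟨A, hAsub, hAsep, hAcov⟩ := exists_sep_cover (E := EuclideanSpace ℝ (Fin n)) Th hThbd hε
  have h1 : coverNum Th ε ≤ A.card := Nat.sInf_le ⟨A, rfl, hAcov⟩
  -- packing bound
  have hdisj : (↑A : Set (EuclideanSpace ℝ (Fin n))).PairwiseDisjoint (fun y => closedBall y (ε/2)) := by
    intro a ha b hb hab
    exact closedBall_disjoint_closedBall (by have := hAsep a ha b hb hab; linarith)
  have hsum : volume (⋃ y ∈ A, closedBall y (ε/2)) =
      (A.card : ENNReal) * (ENNReal.ofReal ((ε/2) ^ n) * V) := by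
    rw [measure_biUnion_finset hdisj (fun _ _ => measurableSet_closedBall)]
    rw [Finset.sum_congr rfl (fun y _ => hvolball y (ε/2) (by linarith))]
    simp [Finset.sum_const, nsmul_eq_mul]
  -- union inside translate of (3/2) • Th
  have hsub2 : (⋃ y ∈ A, closedBall y (ε/2)) ⊆ ((-(1/2 : ℝ)) • x₀) +ᵥ ((3/2 : ℝ) • Th) := by
    intro z hz
    obtain ⟨y, hy, hzy⟩ := mem_iUnion₂.mp hz
    have hyTh : y ∈ Th := hAsub hy
    set b : EuclideanSpace ℝ (Fin n) := z - y with hb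
    have hbnorm : ‖b‖ ≤ ε / 2 := by
      rw [hb, ← dist_eq_norm]; exact mem_closedBall.mp hzy
    have hx2b : x₀ + (2 : ℝ) • b ∈ Th := by
      apply hball
      rw [mem_closedBall, dist_eq_norm]
      have : x₀ + (2:ℝ) • b - x₀ = (2:ℝ) • b := by abel
      rw [this, norm_smul]
      simp only [Real.norm_ofNat]
      linarith
    have hw : y + (1/2 : ℝ) • (x₀ + (2:ℝ) • b) ∈ (3/2 : ℝ) • Th := by
      have h32 : (3/2 : ℝ) • Th = (1 : ℝ) • Th + (1/2 : ℝ) • Th := by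
        rw [← hThconv.add_smul (by norm_num : (0:ℝ) ≤ 1) (by norm_num : (0:ℝ) ≤ 1/2)]
        norm_num
      rw [h32]
      have hy1 : (1:ℝ) • y ∈ (1:ℝ) • Th := smul_mem_smul_set hyTh
      have hmem := Set.add_mem_add hy1 (smul_mem_smul_set (a := (1/2:ℝ)) hx2b)
      simpa using hmem
    refine Set.mem_vadd_set.mpr ⟨_, hw, ?_⟩
    show (-(1/2 : ℝ)) • x₀ + (y + (1/2 : ℝ) • (x₀ + (2:ℝ) • b)) = z
    have : z = y + b := by rw [hb]; abel
    rw [this]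
    module
  have hkey : (A.card : ENNReal) * (ENNReal.ofReal ((ε/2) ^ n) * V) ≤
      ENNReal.ofReal ((3/2) ^ n) * volume Th := by
    rw [← hsum]
    calc volume (⋃ y ∈ A, closedBall y (ε/2))
        ≤ volume (((-(1/2 : ℝ)) • x₀) +ᵥ ((3/2 : ℝ) • Th)) := measure_mono hsub2
      _ = volume ((3/2 : ℝ) • Th) := by rw [measure_vadd]
      _ = ENNReal.ofReal ((3/2) ^ n) * volume Th := by
          rw [Measure.addHaar_smul_of_nonneg volume (by norm_num) Th,
            finrank_euclideanSpace_fin]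
  -- lower bound for coverNum T ε
  obtain ⟨B0, _, _, hB0cov⟩ := exists_sep_cover (E := EuclideanSpace ℝ (Fin n)) T hbd hε
  have hne : {m : ℕ | ∃ t : Finset (EuclideanSpace ℝ (Fin n)), t.card = m ∧ T ⊆ ⋃ y ∈ t, closedBall y ε}.Nonempty :=
    ⟨B0.card, B0, rfl, hB0cov⟩
  obtain ⟨B, hBcard, hBcov⟩ := Nat.sInf_mem hne
  have hkey2 : volume T ≤ (coverNum T ε : ENNReal) * (ENNReal.ofReal (ε ^ n) * V) := by
    calc volume T ≤ volume (⋃ y ∈ B, closedBall y ε) := measure_mono hBcov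
      _ ≤ ∑ y ∈ B, volume (closedBall y ε) := measure_biUnion_finset_le B _
      _ = (B.card : ENNReal) * (ENNReal.ofReal (ε ^ n) * V) := by
          rw [Finset.sum_congr rfl (fun y _ => hvolball y ε hε.le)]
          simp [Finset.sum_const, nsmul_eq_mul]
      _ = (coverNum T ε : ENNReal) * (ENNReal.ofReal (ε ^ n) * V) := by
          rw [hBcard]; rfl
  -- pass to reals
  have hThfin : volume Th ≠ ⊤ := hThbd.measure_lt_top.ne
  have hTfin : volume T ≠ ⊤ := hbd.measure_lt_top.ne
  set Vr : ℝ := V.toReal with hVr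
  have hVrpos : 0 < Vr := ENNReal.toReal_pos hVpos.ne' hVfin
  have KA : (A.card : ℝ) * ((ε/2) ^ n * Vr) ≤ (3/2) ^ n * (volume Th).toReal := by
    have := ENNReal.toReal_mono (by
        exact ENNReal.mul_ne_top ENNReal.ofReal_ne_top hThfin) hkey
    rw [ENNReal.toReal_mul, ENNReal.toReal_mul, ENNReal.toReal_mul,
      ENNReal.toReal_natCast, ENNReal.toReal_ofReal (by positivity),
      ENNReal.toReal_ofReal (by positivity)] at this
    exact this
  have KB : (volume T).toReal ≤ (coverNum T ε : ℝ) * (ε ^ n * Vr) := by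
    have := ENNReal.toReal_mono (by
        exact ENNReal.mul_ne_top (ENNReal.natCast_ne_top _)
          (ENNReal.mul_ne_top ENNReal.ofReal_ne_top hVfin)) hkey2
    rw [ENNReal.toReal_mul, ENNReal.toReal_mul, ENNReal.toReal_natCast,
      ENNReal.toReal_ofReal (by positivity)] at this
    exact this
  -- final arithmetic
  have hX : (0:ℝ) < (ε/2) ^ n * Vr := by positivity
  have hmain : (A.card : ℝ) * ((ε/2) ^ n * Vr) ≤
      (R * 3 ^ n * coverNum T ε) * ((ε/2) ^ n * Vr) := by
    calc (A.card : ℝ) * ((ε/2) ^ n * Vr) ≤ (3/2) ^ n * (volume Th).toReal := KA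
      _ ≤ (3/2) ^ n * (R * (volume T).toReal) := by
          apply mul_le_mul_of_nonneg_left hvol (by positivity)
      _ ≤ (3/2) ^ n * (R * ((coverNum T ε : ℝ) * (ε ^ n * Vr))) := by
          apply mul_le_mul_of_nonneg_left _ (by positivity)
          apply mul_le_mul_of_nonneg_left KB (by linarith)
      _ = (R * 3 ^ n * coverNum T ε) * ((ε/2) ^ n * Vr) := by
          field_simp; simp only [div_pow, one_pow]; ring
  have h2 : (A.card : ℝ) ≤ R * 3 ^ n * coverNum T ε :=
    le_of_mul_le_mul_right hmain hX
  calc (coverNum Th ε : ℝ) ≤ (A.card : ℝ) := by exact_mod_cast h1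
    _ ≤ _ := h2
end
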